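/- Let G be the graph with vertex set T and edges {t't : t' ∈ A*_t}, and suppose c : T → ℕ is a proper colouring of G. Then every t ∈ Σ(T) has a 2-extension t' ∈ Σ(T) such that every 1-extension t'' of t' satisfies c(t'') > c(t*). -/

import Mathlib

/-- An element of the tree `T`: an injective, co-infinite sequence `t : α → ℕ`
(with `ℕ = {1,2,3,…}`) of countable ordinal length `α`.  We encode such a
sequence as a total function `f : Ordinal → ℕ` taking a *positive* value
exactly on the ordinals `β < len` (the value `0` plays the role of
"undefined", which is harmless since the paper's `ℕ` starts at `1`). -/
structure CSeq where
  /-- the length (domain) of the sequence, a countable ordinal -/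
  len : Ordinal
  len_countable : len < Ordinal.omega 1
  /-- the sequence itself, with `f β = 0` meaning "β is outside the domain" -/
  f : Ordinal → ℕ
  dom_iff : ∀ β, β < len ↔ f β ≠ 0
  inj : ∀ β γ, β < len → γ < len → f β = f γ → β = γ
  coinf : {n : ℕ | n ≠ 0 ∧ n ∉ Set.range f}.Infinite

namespace CSeq

/-- the extension order on `T`: `s ≤ t` iff `s = t ↾ dom s`. -/
def Ext (s t : CSeq) : Prop := ∀ β, s.f β ≠ 0 → t.f β = s.f β

/-- strict extension: `s < t`. -/
def ExtLt (s t : CSeq) : Prop := s.Ext t ∧ s ≠ t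

/-- the image `im t ⊆ ℕ = {1,2,…}` of a sequence `t`. -/
def im (t : CSeq) : Set ℕ := {n | n ≠ 0 ∧ n ∈ Set.range t.f}

/-- `t ∈ Σ(T)`: the length of `t` is a successor ordinal. -/
def IsSucc (t : CSeq) : Prop := ∃ α, t.len = α + 1

/-- `last t`: the last value of a sequence (of successor length). -/
noncomputable def lastVal (t : CSeq) : ℕ := t.f (Ordinal.pred t.len)

/-- the restriction `t ↾ γ` of a sequence `t` to an initial segment `γ ≤ dom t`. -/
noncomputable def restrict (t : CSeq) (γ : Ordinal) (h : γ ≤ t.len) : CSeq where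
  len := γ
  len_countable := lt_of_le_of_lt h t.len_countable
  f := fun β => if β < γ then t.f β else 0
  dom_iff := by
    intro β
    constructor
    · intro hβ
      simpa [hβ] using (t.dom_iff β).1 (lt_of_lt_of_le hβ h)
    · intro hβ
      by_contra hc
      simp [hc] at hβ
  inj := by
    intro β γ' hβ hγ
    simp only [if_pos hβ, if_pos hγ]
    exact t.inj β γ' (lt_of_lt_of_le hβ h) (lt_of_lt_of_le hγ h)
  coinf := t.coinf.mono (by
    rintro n ⟨hn0, hn⟩
    refine ⟨hn0, ?_⟩
    rintro ⟨β, hβ⟩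
    by_cases hb : β < γ
    · exact hn ⟨β, by simpa [hb] using hβ⟩
    · simp only [if_neg hb] at hβ
      exact hn0 hβ.symm)

/-- `t* := t ↾ α` for `t` of successor length `α + 1`: the immediate
predecessor of `t` in the tree. -/
noncomputable def star (t : CSeq) : CSeq := t.restrict (Ordinal.pred t.len) (Ordinal.pred_le_self _)

/-- `A_t := {s ≤ t : s ∈ Σ(T), last s = min (im t \ im s*)}`. -/
def A (t : CSeq) : Set CSeq :=
  {s | s.Ext t ∧ s.IsSucc ∧ s.lastVal = sInf (t.im \ s.star.im)}

/-- `A*_t := {s* : s ∈ A_t}`. -/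
def Astar (t : CSeq) : Set CSeq := star '' A t

/-- the graph `G` with vertex set `T` and edges `{t't : t' ∈ A*_t}`. -/
def G : SimpleGraph CSeq := SimpleGraph.fromRel (fun t' t => t' ∈ Astar t)

/-- the graph `G'` with vertex set `T` and edges `{t't : t' ∈ A_t}`. -/
def G' : SimpleGraph CSeq := SimpleGraph.fromRel (fun t' t => t' ∈ A t)

/-- two `t`–`t'` paths are independent (internally disjoint) if they share no
vertices other than `t` and `t'`. -/
def InternallyDisjoint {t t' : CSeq} (p q : G.Path t t') : Prop :=
  ∀ v, v ∈ p.1.support → v ∈ q.1.support → v = t ∨ v = t'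

/-- `t'` is a `k`-extension of `t ∈ Σ(T)` if `t' > t` and every element of
`im t' \ im t` is greater than `a_{k+1}`, where `a_1 < … < a_{k+1}` are the
`k+1` smallest elements of `ℕ \ (im t ∪ [last t])`.  (Recall `Nat.nth p k` is
the `(k+1)`-st element of `{n | p n}` in increasing order.) -/
def IsKExt (k : ℕ) (t t' : CSeq) : Prop :=
  t.ExtLt t' ∧ ∀ n ∈ t'.im \ t.im,
    Nat.nth (fun m => m ∉ t.im ∧ t.lastVal < m) k < n

end CSeq

/-! ### Auxiliary material for `stmt9` -/

namespace CSeq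

theorem eq_of {s t : CSeq} (h1 : s.len = t.len) (h2 : s.f = t.f) : s = t := by
  cases s; cases t; cases h1; cases h2; rfl

theorem Ext.im_subset {s t : CSeq} (h : s.Ext t) : s.im ⊆ t.im := by
  rintro n ⟨hn0, β, hβ⟩
  have hs : s.f β ≠ 0 := by rw [hβ]; exact hn0
  exact ⟨hn0, β, by rw [h β hs]; exact hβ⟩

theorem Ext.trans' {s t u : CSeq} (h : s.Ext t) (h' : t.Ext u) : s.Ext u := by
  intro β hβ
  rw [h' β (by rw [h β hβ]; exact hβ), h β hβ]

theorem Ext.len_le {s t : CSeq} (h : s.Ext t) : s.len ≤ t.len := by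
  by_contra hlt
  push_neg at hlt
  have h1 : s.f t.len ≠ 0 := (s.dom_iff t.len).1 hlt
  have h2 : t.f t.len ≠ 0 := by rw [h _ h1]; exact h1
  exact absurd ((t.dom_iff t.len).2 h2) (lt_irrefl _)

theorem eq_of_ext_of_len_le {s t : CSeq} (h : s.Ext t) (hl : t.len ≤ s.len) : s = t := by
  refine eq_of (le_antisymm h.len_le hl) ?_
  funext β
  by_cases h0 : s.f β = 0
  · have ht0 : t.f β = 0 := by
      by_contra h1
      exact absurd h0 ((s.dom_iff β).1 (lt_of_lt_of_le ((t.dom_iff β).2 h1) hl))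
    rw [h0, ht0]
  · exact (h β h0).symm

theorem ExtLt.len_lt {s t : CSeq} (h : s.ExtLt t) : s.len < t.len :=
  lt_of_le_of_ne h.1.len_le fun he => h.2 (eq_of_ext_of_len_le h.1 he.ge)

theorem ne_of_len_lt {s t : CSeq} (h : s.len < t.len) : s ≠ t := fun he => by
  rw [he] at h; exact lt_irrefl _ h

theorem ExtLt.trans_ext {s t u : CSeq} (h : s.ExtLt t) (h' : t.Ext u) : s.ExtLt u :=
  ⟨h.1.trans' h', ne_of_len_lt (lt_of_lt_of_le h.len_lt h'.len_le)⟩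

theorem Ext.trans_extLt {s t u : CSeq} (h : s.Ext t) (h' : t.ExtLt u) : s.ExtLt u :=
  ⟨h.trans' h'.1, ne_of_len_lt (lt_of_le_of_lt h.len_le h'.len_lt)⟩

/-- append a fresh value `n` to the end of the sequence `u`. -/
noncomputable def snoc (u : CSeq) (n : ℕ) (hn : n ≠ 0) (hn' : n ∉ Set.range u.f) : CSeq where
  len := u.len + 1
  len_countable := by
    rw [Ordinal.add_one_eq_succ]
    exact (Cardinal.isSuccLimit_omega 1).succ_lt u.len_countable
  f := fun β => if β = u.len then n else u.f β
  dom_iff := by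
    intro β
    rw [Ordinal.add_one_eq_succ, Order.lt_succ_iff]
    by_cases hb : β = u.len
    · subst hb; simp [hn]
    · simp only [if_neg hb]
      rw [← u.dom_iff]
      exact ⟨fun hle => lt_of_le_of_ne hle hb, le_of_lt⟩
  inj := by
    intro β γ hβ hγ hfg
    rw [Ordinal.add_one_eq_succ, Order.lt_succ_iff] at hβ hγ
    change (if β = u.len then n else u.f β) = (if γ = u.len then n else u.f γ) at hfg
    by_cases hb : β = u.len <;> by_cases hg : γ = u.len
    · rw [hb, hg]
    · rw [if_pos hb, if_neg hg] at hfg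
      exact absurd ⟨γ, hfg.symm⟩ hn'
    · rw [if_neg hb, if_pos hg] at hfg
      exact absurd ⟨β, hfg⟩ hn'
    · rw [if_neg hb, if_neg hg] at hfg
      exact u.inj β γ (lt_of_le_of_ne hβ hb) (lt_of_le_of_ne hγ hg) hfg
  coinf := by
    apply (u.coinf.diff (Set.finite_singleton n)).mono
    rintro m ⟨⟨hm0, hmr⟩, hmn⟩
    refine ⟨hm0, ?_⟩
    rintro ⟨β, hβ⟩
    change (if β = u.len then n else u.f β) = m at hβ
    by_cases hb : β = u.len
    · rw [if_pos hb] at hβ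
      exact hmn (Set.mem_singleton_iff.2 hβ.symm)
    · rw [if_neg hb] at hβ
      exact hmr ⟨β, hβ⟩

theorem len_snoc (u : CSeq) (n : ℕ) (hn : n ≠ 0) (hn' : n ∉ Set.range u.f) :
    (snoc u n hn hn').len = u.len + 1 := rfl

theorem pred_len_snoc (u : CSeq) (n : ℕ) (hn : n ≠ 0) (hn' : n ∉ Set.range u.f) :
    Ordinal.pred (snoc u n hn hn').len = u.len := by
  rw [len_snoc, Ordinal.add_one_eq_succ, Ordinal.pred_succ]

theorem lastVal_snoc (u : CSeq) (n : ℕ) (hn : n ≠ 0) (hn' : n ∉ Set.range u.f) :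
    (snoc u n hn hn').lastVal = n := by
  rw [lastVal, pred_len_snoc]
  exact if_pos rfl

theorem isSucc_snoc (u : CSeq) (n : ℕ) (hn : n ≠ 0) (hn' : n ∉ Set.range u.f) :
    (snoc u n hn hn').IsSucc := ⟨u.len, rfl⟩

theorem star_snoc (u : CSeq) (n : ℕ) (hn : n ≠ 0) (hn' : n ∉ Set.range u.f) :
    (snoc u n hn hn').star = u := by
  apply eq_of
  · exact pred_len_snoc u n hn hn'
  · funext β
    show (if β < Ordinal.pred (snoc u n hn hn').len then (snoc u n hn hn').f β else 0) = u.f β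
    rw [pred_len_snoc]
    by_cases hb : β < u.len
    · rw [if_pos hb]
      show (if β = u.len then n else u.f β) = u.f β
      rw [if_neg (ne_of_lt hb)]
    · rw [if_neg hb]
      by_contra h1
      exact hb ((u.dom_iff β).2 fun h => h1 h.symm)

theorem im_snoc (u : CSeq) (n : ℕ) (hn : n ≠ 0) (hn' : n ∉ Set.range u.f) :
    (snoc u n hn hn').im = u.im ∪ {n} := by
  ext m
  constructor
  · rintro ⟨hm0, β, hβ⟩
    change (if β = u.len then n else u.f β) = m at hβ
    by_cases hb : β = u.len
    · rw [if_pos hb] at hβ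
      exact Or.inr (Set.mem_singleton_iff.2 hβ.symm)
    · rw [if_neg hb] at hβ
      exact Or.inl ⟨hm0, β, hβ⟩
  · rintro (⟨hm0, β, hβ⟩ | hm)
    · refine ⟨hm0, β, ?_⟩
      have hlt : β < u.len := (u.dom_iff β).2 (by rw [hβ]; exact hm0)
      show (if β = u.len then n else u.f β) = m
      rw [if_neg (ne_of_lt hlt), hβ]
    · rw [Set.mem_singleton_iff] at hm
      rw [hm]
      exact ⟨hn, u.len, if_pos rfl⟩

theorem ext_snoc (u : CSeq) (n : ℕ) (hn : n ≠ 0) (hn' : n ∉ Set.range u.f) :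
    u.Ext (snoc u n hn hn') := by
  intro β hβ
  show (if β = u.len then n else u.f β) = u.f β
  rw [if_neg (ne_of_lt ((u.dom_iff β).2 hβ))]

theorem extLt_snoc (u : CSeq) (n : ℕ) (hn : n ≠ 0) (hn' : n ∉ Set.range u.f) :
    u.ExtLt (snoc u n hn hn') :=
  ⟨ext_snoc u n hn hn', fun he =>
    ne_of_len_lt (s := u) (t := snoc u n hn hn')
      (by rw [len_snoc, Ordinal.add_one_eq_succ]; exact Order.lt_succ _) he⟩

theorem lastVal_mem_im {u : CSeq} (h : u.IsSucc) : u.lastVal ∈ u.im := by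
  obtain ⟨α, hα⟩ := h
  have hp : Ordinal.pred u.len = α := by rw [hα, Ordinal.add_one_eq_succ, Ordinal.pred_succ]
  have hlt : α < u.len := by rw [hα, Ordinal.add_one_eq_succ]; exact Order.lt_succ _
  have hne := (u.dom_iff α).1 hlt
  exact ⟨by rw [lastVal, hp]; exact hne, α, by rw [lastVal, hp]⟩

theorem exists_fresh (u : CSeq) (M : ℕ) : ∃ v, M < v ∧ v ≠ 0 ∧ v ∉ Set.range u.f := by
  obtain ⟨v, hv, hlt⟩ := u.coinf.exists_gt M
  exact ⟨v, hlt, hv.1, hv.2⟩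

theorem infinite_skip (u : CSeq) : {m : ℕ | m ∉ u.im ∧ u.lastVal < m}.Infinite := by
  apply (u.coinf.diff (Set.finite_Iic u.lastVal)).mono
  rintro m ⟨⟨hm0, hmr⟩, hm⟩
  simp only [Set.mem_Iic] at hm
  exact ⟨fun hmem => hmr hmem.2, lt_of_not_ge hm⟩

theorem nth_skip_gt (u : CSeq) (k : ℕ) :
    u.lastVal < Nat.nth (fun m => m ∉ u.im ∧ u.lastVal < m) k :=
  (Nat.nth_mem_of_infinite (infinite_skip u) k).2

end CSeq

open CSeq in
/-- the state used in the recursive construction in the proof of `stmt9`: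
`u = w ⌢ ⟨v⟩` for some fresh `v > N`, with `t < u` and all new values `> N`. -/
structure Stmt9St (t : CSeq) (N : ℕ) where
  w : CSeq
  u : CSeq
  hsucc : u.IsSucc
  hstar : u.star = w
  hwu : w.ExtLt u
  hvw : u.lastVal ∉ w.im
  him : u.im = w.im ∪ {u.lastVal}
  hTu : t.ExtLt u
  hbig : ∀ m, m ∈ u.im → m ∉ t.im → N < m
  hvbig : N < u.lastVal

open CSeq in
/-- build a state by appending a fresh value `v` to a sequence `b ≥ t`. -/
noncomputable def Stmt9St.mk' (t : CSeq) (N : ℕ) (b : CSeq) (htb : t.Ext b)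
    (hbbig : ∀ m, m ∈ b.im → m ∉ t.im → N < m)
    (v : ℕ) (hv0 : v ≠ 0) (hvr : v ∉ Set.range b.f) (hvN : N < v) : Stmt9St t N where
  w := b
  u := snoc b v hv0 hvr
  hsucc := isSucc_snoc b v hv0 hvr
  hstar := star_snoc b v hv0 hvr
  hwu := extLt_snoc b v hv0 hvr
  hvw := by rw [lastVal_snoc]; exact fun hm => hvr hm.2
  him := by rw [im_snoc, lastVal_snoc]
  hTu := htb.trans_extLt (extLt_snoc b v hv0 hvr)
  hbig := by
    intro m hm hmt
    rw [im_snoc] at hm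
    rcases hm with hm | hm
    · exact hbbig m hm hmt
    · rw [Set.mem_singleton_iff] at hm
      rw [hm]; exact hvN
  hvbig := by rw [lastVal_snoc]; exact hvN

open CSeq in
/-- If `c : T → ℕ` is a proper colouring of `G`, then every
`t ∈ Σ(T)` has a `2`-extension `t' ∈ Σ(T)` such that every `1`-extension `t''`
of `t'` satisfies `c t'' > c t*`. -/
theorem stmt9 (c : CSeq → ℕ) (hc : ∀ t t' : CSeq, G.Adj t t' → c t ≠ c t')
    (t : CSeq) (ht : t.IsSucc) :
    ∃ t' : CSeq, t'.IsSucc ∧ IsKExt 2 t t' ∧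
      ∀ t'' : CSeq, IsKExt 1 t' t'' → c t.star < c t'' := by
  classical
  by_contra hcon
  push_neg at hcon
  set N : ℕ := Nat.nth (fun m => m ∉ t.im ∧ t.lastVal < m) 2 with hN
  -- the step of the recursion
  have key : ∀ s : Stmt9St t N, ∃ s' : Stmt9St t N,
      IsKExt 1 s.u s'.w ∧ s.u.lastVal < s'.u.lastVal ∧ c s'.w ≤ c t.star := by
    intro s
    obtain ⟨w', hw1, hw2⟩ := hcon s.u s.hsucc ⟨s.hTu, fun n hn => s.hbig n hn.1 hn.2⟩
    obtain ⟨v, hvgt, hv0, hvr⟩ := exists_fresh w' (max N s.u.lastVal)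
    have hvN : N < v := lt_of_le_of_lt (le_max_left _ _) hvgt
    refine ⟨Stmt9St.mk' t N w' (s.hTu.1.trans' hw1.1.1) ?_ v hv0 hvr hvN, hw1, ?_, hw2⟩
    · intro m hm hmt
      by_cases hmu : m ∈ s.u.im
      · exact s.hbig m hmu hmt
      · exact lt_trans (lt_trans s.hvbig (nth_skip_gt s.u 1)) (hw1.2 m ⟨hm, hmu⟩)
    · show s.u.lastVal < (snoc w' v hv0 hvr).lastVal
      rw [lastVal_snoc]
      exact lt_of_le_of_lt (le_max_right _ _) hvgt
  -- the base state
  obtain ⟨v0, hv0gt, hv00, hv0r⟩ := exists_fresh t N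
  have s0 : Stmt9St t N :=
    Stmt9St.mk' t N t (fun β _ => rfl) (fun m hm hmt => absurd hm hmt) v0 hv00 hv0r hv0gt
  choose F hF1 hF2 hF3 using key
  set sq : ℕ → Stmt9St t N := fun n => F^[n] s0 with hsq
  have hstep : ∀ i, sq (i + 1) = F (sq i) := fun i => Function.iterate_succ_apply' F i s0
  have hR1 : ∀ i, IsKExt 1 (sq i).u (sq (i + 1)).w := fun i => by rw [hstep]; exact hF1 _
  have hR2 : ∀ i, (sq i).u.lastVal < (sq (i + 1)).u.lastVal := fun i => by
    rw [hstep]; exact hF2 _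
  have hR3 : ∀ i, c (sq (i + 1)).w ≤ c t.star := fun i => by rw [hstep]; exact hF3 _
  -- the chain of extensions
  have hchain : ∀ i j, i ≤ j → (sq i).u.Ext (sq j).u := by
    intro i j hij
    induction j with
    | zero =>
      cases Nat.le_zero.1 hij
      exact fun β _ => rfl
    | succ j ih =>
      rcases Nat.le_succ_iff.1 hij with h | h
      · exact (ih h).trans' ((hR1 j).1.1.trans' (sq (j + 1)).hwu.1)
      · rw [h]; exact fun β _ => rfl
  have huw : ∀ j i, j < i → (sq j).u.ExtLt (sq i).w := by
    intro j i hji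
    obtain ⟨i, rfl⟩ : ∃ i', i = i' + 1 := ⟨i - 1, by omega⟩
    exact (hchain j i (Nat.lt_succ_iff.1 hji)).trans_extLt (hR1 i).1
  have hlmono : ∀ i j, i < j → (sq i).u.lastVal < (sq j).u.lastVal := by
    intro i j
    induction j with
    | zero => omega
    | succ j ih =>
      intro hij
      rcases Nat.lt_succ_iff_lt_or_eq.1 hij with h | h
      · exact lt_trans (ih h) (hR2 j)
      · rw [h]; exact hR2 j
  have hstep_big : ∀ i m, m ∈ (sq (i + 1)).u.im → m ∉ (sq i).u.im → (sq i).u.lastVal < m := by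
    intro i m hm hmn
    rw [(sq (i + 1)).him] at hm
    rcases hm with hm | hm
    · exact lt_trans (nth_skip_gt (sq i).u 1) ((hR1 i).2 m ⟨hm, hmn⟩)
    · rw [Set.mem_singleton_iff] at hm
      rw [hm]; exact hR2 i
  have hbig2 : ∀ j i, j < i → ∀ m, m ∈ (sq i).u.im → m ∉ (sq j).u.im →
      (sq j).u.lastVal < m := by
    intro j i
    induction i with
    | zero => omega
    | succ i ih =>
      intro hji m hm hmn
      rcases Nat.lt_succ_iff_lt_or_eq.1 hji with h | h
      · by_cases hmi : m ∈ (sq i).u.im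
        · exact ih h m hmi hmn
        · exact lt_trans (hlmono j i h) (hstep_big i m hm hmi)
      · rw [h]; exact hstep_big i m hm (h ▸ hmn)
  -- adjacency, hence distinct colours, along the chain
  have hAdj : ∀ j i, j < i → c (sq j).w ≠ c (sq i).w := by
    intro j i hji
    apply hc
    have hwext : (sq j).w.ExtLt (sq i).w := (sq j).hwu.trans_ext (huw j i hji).1
    show (SimpleGraph.fromRel fun t' t => t' ∈ Astar t).Adj _ _
    rw [SimpleGraph.fromRel_adj]
    refine ⟨ne_of_len_lt hwext.len_lt, Or.inl ⟨(sq j).u, ⟨(huw j i hji).1, (sq j).hsucc, ?_⟩,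
      (sq j).hstar⟩⟩
    rw [(sq j).hstar]
    have hmem : (sq j).u.lastVal ∈ (sq i).w.im \ (sq j).w.im :=
      ⟨(huw j i hji).1.im_subset (lastVal_mem_im (sq j).hsucc), (sq j).hvw⟩
    refine le_antisymm (le_csInf ⟨_, hmem⟩ ?_) (Nat.sInf_le hmem)
    rintro m ⟨hm1, hm2⟩
    by_cases hmu : m ∈ (sq j).u.im
    · rw [(sq j).him] at hmu
      rcases hmu with hmu | hmu
      · exact absurd hmu hm2
      · rw [Set.mem_singleton_iff] at hmu
        rw [hmu]
    · exact le_of_lt (hbig2 j i hji m ((sq i).hwu.1.im_subset hm1) hmu)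
  -- pigeonhole
  have hinj : Function.Injective fun i => c (sq (i + 1)).w := by
    intro a b hab
    by_contra hne
    rcases lt_or_gt_of_ne hne with h | h
    · exact hAdj (a + 1) (b + 1) (by omega) hab
    · exact hAdj (b + 1) (a + 1) (by omega) hab.symm
  have hrange : Set.range (fun i => c (sq (i + 1)).w) ⊆ Set.Iic (c t.star) := by
    rintro x ⟨i, rfl⟩
    exact hR3 i
  exact ((Set.finite_Iic (c t.star)).subset hrange).not_infinite
    (Set.infinite_range_of_injective hinj)
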